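/- For the linear toy model, if ν ∈ C^{1,2}([0,T)×ℝ) solves ∂_t ν − ν ∂_ξ ν + (σ²(T−t)²/2) ∂²_{ξξ} ν = 0, then the function 𝒱(t,p,e) := ν(t, e + (T−t)·(1/√d)·∑_{ℓ=1}^d p_ℓ) solves the quasilinear PDE ∂_t 𝒱 + ((1/√d)∑_ℓ p_ℓ − 𝒱) ∂_e 𝒱 + (σ²/2) Δ_{pp} 𝒱 = 0 on [0,T) × ℝ^d × ℝ. -/

import Mathlib

/-- change of variables for the linear toy model: if ν solves
∂_t ν − ν ∂_ξ ν + σ²(T−t)²/2 ∂²_{ξξ} ν = 0, then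
𝒱(t,p,e) = ν(t, e + (T−t)(1/√d)∑_ℓ p_ℓ) solves
∂_t 𝒱 + ((1/√d)∑_ℓ p_ℓ − 𝒱)∂_e 𝒱 + (σ²/2)Δ_{pp}𝒱 = 0 on [0,T) × ℝ^d × ℝ. -/
theorem stmt19 (T σ : ℝ) (hT : 0 < T) (hσ : 0 < σ) (d : ℕ) (hd : 0 < d)
    (ν : ℝ → ℝ → ℝ)
    (hν : ContDiff ℝ 2 (Function.uncurry ν))
    (hpde : ∀ t ∈ Set.Ico (0:ℝ) T, ∀ ξ : ℝ,
      deriv (fun s => ν s ξ) t - ν t ξ * deriv (ν t) ξ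
        + σ ^ 2 * (T - t) ^ 2 / 2 * iteratedDeriv 2 (ν t) ξ = 0)
    (S : (Fin d → ℝ) → ℝ) (hS : ∀ p, S p = (1 / Real.sqrt d) * ∑ ℓ : Fin d, p ℓ)
    (𝒱 : ℝ → (Fin d → ℝ) → ℝ → ℝ)
    (h𝒱 : ∀ t p e, 𝒱 t p e = ν t (e + (T - t) * S p)) :
    ∀ t ∈ Set.Ico (0:ℝ) T, ∀ (p : Fin d → ℝ) (e : ℝ),
      deriv (fun s => 𝒱 s p e) t
        + (S p - 𝒱 t p e) * deriv (fun x => 𝒱 t p x) e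
        + σ ^ 2 / 2 * ∑ ℓ : Fin d,
            iteratedDeriv 2 (fun x => 𝒱 t (Function.update p ℓ x) e) (p ℓ) = 0 := by
  intro t ht p e
  have hd' : (0:ℝ) < (d:ℝ) := by exact_mod_cast hd
  have hsd : (0:ℝ) < Real.sqrt d := Real.sqrt_pos.2 hd'
  have hsq : Real.sqrt d * Real.sqrt d = (d:ℝ) := Real.mul_self_sqrt hd'.le
  set ξ : ℝ := e + (T - t) * S p with hξ
  have hFdiff : Differentiable ℝ (Function.uncurry ν) := hν.differentiable (by norm_num)
  set L := fderiv ℝ (Function.uncurry ν) (t, ξ) with hLdef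
  have hLd : HasFDerivAt (Function.uncurry ν) L (t, ξ) := (hFdiff (t, ξ)).hasFDerivAt
  -- partial derivatives of ν at (t, ξ)
  have ht1 : deriv (fun s => ν s ξ) t = L (1, 0) := by
    have h1 : HasDerivAt (fun s : ℝ => (s, ξ)) ((1 : ℝ), (0 : ℝ)) t :=
      (hasDerivAt_id t).prodMk (hasDerivAt_const t ξ)
    exact (hLd.comp_hasDerivAt t h1).deriv
  have ht2 : deriv (ν t) ξ = L (0, 1) := by
    have h1 : HasDerivAt (fun x : ℝ => (t, x)) ((0 : ℝ), (1 : ℝ)) ξ :=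
      (hasDerivAt_const ξ t).prodMk (hasDerivAt_id ξ)
    exact (hLd.comp_hasDerivAt ξ h1).deriv
  -- ν t is C²
  have hνt : ContDiff ℝ 2 (ν t) := by
    have : ContDiff ℝ 2 (fun x : ℝ => Function.uncurry ν (t, x)) :=
      hν.comp (contDiff_const.prodMk contDiff_id)
    exact this
  -- time derivative of 𝒱
  have hVt : deriv (fun s => 𝒱 s p e) t = L (1, 0) - S p * L (0, 1) := by
    have heq : (fun s => 𝒱 s p e) = fun s => Function.uncurry ν (s, e + (T - s) * S p) := by
      funext s; rw [h𝒱]; rfl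
    have hg : HasDerivAt (fun s : ℝ => e + (T - s) * S p) (-1 * S p) t :=
      (((hasDerivAt_id t).const_sub T).mul_const (S p)).const_add e
    have h1 : HasDerivAt (fun s : ℝ => (s, e + (T - s) * S p)) ((1 : ℝ), -1 * S p) t :=
      (hasDerivAt_id t).prodMk hg
    have h2 : HasDerivAt (fun s => Function.uncurry ν (s, e + (T - s) * S p))
        (L (1, -1 * S p)) t := by have := hLd.comp_hasDerivAt t h1; exact this
    rw [heq, h2.deriv]
    have : ((1 : ℝ), -1 * S p) = ((1 : ℝ), (0 : ℝ)) + (-(S p)) • ((0 : ℝ), (1 : ℝ)) := by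
      simp [Prod.ext_iff]
    rw [this, map_add, map_smul, smul_eq_mul]; ring
  -- e derivative of 𝒱
  have hVe : deriv (fun x => 𝒱 t p x) e = L (0, 1) := by
    have heq : (fun x => 𝒱 t p x) = fun x => Function.uncurry ν (t, x + (T - t) * S p) := by
      funext x; rw [h𝒱]; rfl
    have hg : HasDerivAt (fun x : ℝ => x + (T - t) * S p) 1 e :=
      (hasDerivAt_id e).add_const _
    have h1 : HasDerivAt (fun x : ℝ => (t, x + (T - t) * S p)) ((0 : ℝ), (1 : ℝ)) e :=
      (hasDerivAt_const e t).prodMk hg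
    have h2 := hLd.comp_hasDerivAt e h1
    rw [heq]
    exact h2.deriv
  -- second derivatives in p
  set a : ℝ := (T - t) * (1 / Real.sqrt d) with hadef
  have hVpp : ∀ ℓ : Fin d,
      iteratedDeriv 2 (fun x => 𝒱 t (Function.update p ℓ x) e) (p ℓ)
        = a ^ 2 * iteratedDeriv 2 (ν t) ξ := by
    intro ℓ
    set c : ℝ := e + (T - t) * ((1 / Real.sqrt d) * ∑ j ∈ Finset.univ.erase ℓ, p j) with hcdef
    have harg : ∀ x : ℝ, e + (T - t) * S (Function.update p ℓ x) = c + a * x := by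
      intro x
      rw [hS, Finset.sum_update_of_mem (Finset.mem_univ ℓ)]
      rw [hcdef, hadef]; simp only [Finset.erase_eq]; ring
    have heq : (fun x => 𝒱 t (Function.update p ℓ x) e)
        = fun x => (fun y => ν t (c + y)) (a * x) := by
      funext x; rw [h𝒱, harg]
    have hcd : ContDiff ℝ 2 (fun y => ν t (c + y)) :=
      hνt.comp (contDiff_const.add contDiff_id)
    have hcs := iteratedDeriv_comp_const_smul (n := 2) hcd a
    have hpt : c + a * p ℓ = ξ := by
      rw [hξ, hS, ← Finset.add_sum_erase _ p (Finset.mem_univ ℓ), hcdef, hadef]; ring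
    rw [heq, congrFun hcs (p ℓ), smul_eq_mul,
      iteratedDeriv_comp_const_add 2 (ν t) c]
    show a ^ 2 * iteratedDeriv 2 (ν t) (c + a * p ℓ) = _
    rw [hpt]
  have hsum : ∑ ℓ : Fin d,
      iteratedDeriv 2 (fun x => 𝒱 t (Function.update p ℓ x) e) (p ℓ)
        = (T - t) ^ 2 * iteratedDeriv 2 (ν t) ξ := by
    rw [Finset.sum_congr rfl (fun ℓ _ => hVpp ℓ), Finset.sum_const, Finset.card_univ,
      Fintype.card_fin, nsmul_eq_mul]
    have ha2 : a ^ 2 = (T - t) ^ 2 / (d : ℝ) := by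
      rw [hadef, mul_pow, div_pow, one_pow, pow_two (Real.sqrt (d:ℝ)), hsq]
      ring
    rw [ha2]; field_simp
  have hpde' := hpde t ht ξ
  rw [ht1, ht2] at hpde'
  rw [hVt, hVe, hsum, h𝒱, ← hξ]
  nlinarith [hpde']
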